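/- For all x, y in the unit disk B² ⊂ ℂ, the Barrlund metric with p = 2 satisfies b_{B²,2}(x,y) = |x−y| / sqrt(2 + |x|² + |y|² − 2|x+y|). -/

import Mathlib

/-- Barrlund metric with parameter 2 of the unit disk. -/
noncomputable def bB2 (x y : ℂ) : ℝ :=
  sSup ((fun z => ‖x - y‖ /
    Real.sqrt (‖x - z‖ ^ 2 + ‖z - y‖ ^ 2)) '' {z : ℂ | ‖z‖ = 1})

theorem stmt_2 (x y : ℂ) (hx : ‖x‖ < 1) (hy : ‖y‖ < 1) :
    bB2 x y = ‖x - y‖ /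
      Real.sqrt (2 + ‖x‖ ^ 2 + ‖y‖ ^ 2 - 2 * ‖x + y‖) := by
  have habs := norm_add_le x y
  set m : ℝ := 2 + ‖x‖ ^ 2 + ‖y‖ ^ 2 - 2 * ‖x + y‖ with hm
  have hmpos : 0 < m := by nlinarith [norm_nonneg x, norm_nonneg y]
  have key : ∀ z : ℂ, ‖z‖ = 1 →
      ‖x - z‖ ^ 2 + ‖z - y‖ ^ 2
        = 2 + ‖x‖ ^ 2 + ‖y‖ ^ 2
            - 2 * ((x + y) * (starRingEnd ℂ) z).re := by
    intro z hz
    have h1 : z.re ^ 2 + z.im ^ 2 = 1 := by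
      have := Complex.sq_norm z
      rw [hz] at this
      simp [Complex.normSq_apply] at this
      nlinarith [this]
    simp only [Complex.sq_norm, Complex.normSq_apply, Complex.sub_re, Complex.sub_im,
      Complex.add_re, Complex.add_im, Complex.mul_re, Complex.conj_re, Complex.conj_im]
    ring_nf
    nlinarith [h1]
  have hre : ∀ z : ℂ, ‖z‖ = 1 →
      ((x + y) * (starRingEnd ℂ) z).re ≤ ‖x + y‖ := by
    intro z hz
    calc ((x + y) * (starRingEnd ℂ) z).re ≤ ‖(x + y) * (starRingEnd ℂ) z‖ :=
          Complex.re_le_norm _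
      _ = ‖x + y‖ := by rw [norm_mul, Complex.norm_conj, hz, mul_one]
  -- the maximizing point
  obtain ⟨z₀, hz₀, hz₀re⟩ : ∃ z₀ : ℂ, ‖z₀‖ = 1 ∧
      ((x + y) * (starRingEnd ℂ) z₀).re = ‖x + y‖ := by
    by_cases h : x + y = 0
    · exact ⟨1, by simp, by simp [h]⟩
    · have hr0 : ‖x + y‖ ≠ 0 := norm_ne_zero_iff.mpr h
      refine ⟨(x + y) / (‖x + y‖ : ℂ), ?_, ?_⟩
      · rw [norm_div, Complex.norm_real, Real.norm_eq_abs, abs_of_nonneg (norm_nonneg _),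
          div_self hr0]
      · rw [map_div₀, Complex.conj_ofReal, mul_div_assoc', Complex.mul_conj,
          Complex.div_re]
        simp only [Complex.normSq_apply, Complex.ofReal_re, Complex.ofReal_im]
        have h2 : (x + y).re * (x + y).re + (x + y).im * (x + y).im
            = ‖x + y‖ ^ 2 := by
          rw [Complex.sq_norm, Complex.normSq_apply]
        rw [h2]
        field_simp
        ring
  have hgreat : IsGreatest ((fun z => ‖x - y‖ /
      Real.sqrt (‖x - z‖ ^ 2 + ‖z - y‖ ^ 2)) ''
        {z : ℂ | ‖z‖ = 1}) (‖x - y‖ / Real.sqrt m) := by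
    constructor
    · refine ⟨z₀, hz₀, ?_⟩
      dsimp only
      rw [key z₀ hz₀, hz₀re]
    · rintro r ⟨z, hz, rfl⟩
      dsimp only
      rw [key z hz]
      have hle : m ≤ 2 + ‖x‖ ^ 2 + ‖y‖ ^ 2
          - 2 * ((x + y) * (starRingEnd ℂ) z).re := by
        have := hre z hz
        simp only [hm]; linarith
      gcongr
  exact hgreat.csSup_eq
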